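/- Let k ∈ ℕ, N ∈ ℕ, ε > 0, and let R > 0 be such that |tanh^{(m)}| is monotonically decreasing on [R, ∞) for every 1 ≤ m ≤ k. Set α = N · max{R, ln((2k)^{k+1} (Nk)^k / (e^k ε))}. Then α/N ≥ R, 1 − tanh(α/N) ≤ ε, and α^m |tanh^{(m)}(α/N)| ≤ ε for every 1 ≤ m ≤ k. -/

import Mathlib

set_option maxHeartbeats 1000000

open Polynomial Nat


/-- derivative of tanh -/
lemma hasDerivAt_tanh' (x : ℝ) : HasDerivAt Real.tanh (1 - Real.tanh x ^ 2) x := by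
  have hc := Real.cosh_pos x
  have h := (Real.hasDerivAt_sinh x).div (Real.hasDerivAt_cosh x) hc.ne'
  have hsq := Real.cosh_sq_sub_sinh_sq x
  have hfun : Real.tanh = fun y => Real.sinh y / Real.cosh y := by
    funext y; exact Real.tanh_eq_sinh_div_cosh y
  rw [hfun]
  refine h.congr_deriv ?_
  field_simp

noncomputable def tanhP : ℕ → Polynomial ℝ
  | 0 => X
  | n+1 => derivative (tanhP n) * (1 - X^2)

lemma iterP (n : ℕ) : iteratedDeriv n Real.tanh = fun x => (tanhP n).eval (Real.tanh x) := by
  induction n with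
  | zero => funext x; simp [tanhP]
  | succ n ih =>
    rw [iteratedDeriv_succ, ih]
    funext x
    have h2 : HasDerivAt (fun y => (tanhP n).eval (Real.tanh y))
        (eval (Real.tanh x) (derivative (tanhP n)) * (1 - Real.tanh x ^ 2)) x :=
      ((tanhP n).hasDerivAt (Real.tanh x)).comp x (hasDerivAt_tanh' x)
    rw [h2.deriv]
    simp [tanhP]



noncomputable def tanhQ : ℕ → Polynomial ℝ
  | 0 => 1
  | n+1 => derivative (tanhQ n) - derivative (tanhQ n) * X^2 - C 2 * (tanhQ n * X^1)

lemma PQ : ∀ n, tanhP (n+1) = (1 - X^2) * tanhQ n := by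
  intro n
  induction n with
  | zero => simp [tanhP, tanhQ]
  | succ n ih =>
    show derivative (tanhP (n+1)) * (1 - X^2) = _
    rw [ih]
    simp only [tanhQ, derivative_mul, derivative_sub, derivative_one, derivative_X_pow]
    push_cast
    ring

lemma degQ : ∀ n, (tanhQ n).natDegree ≤ n := by
  intro n
  induction n with
  | zero => simp [tanhQ]
  | succ n ih =>
    show (derivative (tanhQ n) - derivative (tanhQ n) * X^2 - C 2 * (tanhQ n * X^1)).natDegree ≤ n+1
    refine le_trans (natDegree_sub_le _ _) (max_le (le_trans (natDegree_sub_le _ _) (max_le ?_ ?_)) ?_)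
    · exact le_trans (natDegree_derivative_le _) (by omega)
    · rcases Nat.eq_zero_or_pos n with h0 | hpos
      · subst h0
        simp [tanhQ]
      · refine le_trans (natDegree_mul_le) ?_
        have h1 : (derivative (tanhQ n)).natDegree ≤ n - 1 :=
          le_trans (natDegree_derivative_le _) (by omega)
        have h2 : (X^2 : Polynomial ℝ).natDegree ≤ 2 := by
          simp [natDegree_X_pow]
        omega
    · refine le_trans (natDegree_mul_le) ?_
      have h2 : (tanhQ n * X^1).natDegree ≤ n + 1 := by
        refine le_trans natDegree_mul_le ?_
        simp only [natDegree_X_pow]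
        omega
      simp only [natDegree_C, zero_add]
      exact h2




lemma coeffQ : ∀ n i, |(tanhQ n).coeff i| ≤ 2^n * (n ! : ℝ) := by
  intro n
  induction n with
  | zero =>
    intro i
    simp only [tanhQ, coeff_one]
    split <;> simp
  | succ n ih =>
    intro i
    have hB : (0:ℝ) ≤ 2^n * (n ! : ℝ) := by positivity
    have hq' : ∀ j, |(derivative (tanhQ n)).coeff j| ≤ (n:ℝ) * (2^n * (n ! : ℝ)) := by
      intro j
      rw [coeff_derivative]
      rcases le_or_gt n j with hj | hj
      · have : (tanhQ n).coeff (j+1) = 0 :=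
          coeff_eq_zero_of_natDegree_lt (lt_of_le_of_lt (degQ n) (by omega))
        simp [this]
        positivity
      · rw [abs_mul]
        have h1 : |(tanhQ n).coeff (j+1)| ≤ 2^n * (n ! : ℝ) := ih _
        have h2 : |((j:ℝ) + 1)| ≤ (n:ℝ) := by
          rw [abs_of_nonneg (by positivity)]
          have : (j:ℝ) + 1 ≤ (n:ℝ) := by exact_mod_cast hj
          linarith
        calc |(tanhQ n).coeff (j+1)| * |((j:ℝ) + 1)| ≤ (2^n * (n ! : ℝ)) * (n:ℝ) :=
              mul_le_mul h1 h2 (abs_nonneg _) hB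
          _ = (n:ℝ) * (2^n * (n ! : ℝ)) := by ring
    have hqX : ∀ j, |(tanhQ n * X^1).coeff j| ≤ 2^n * (n ! : ℝ) := by
      intro j
      rw [coeff_mul_X_pow']
      split
      · exact ih _
      · simpa using hB
    have hq'X : ∀ j, |(derivative (tanhQ n) * X^2).coeff j| ≤ (n:ℝ) * (2^n * (n ! : ℝ)) := by
      intro j
      rw [coeff_mul_X_pow']
      split
      · exact hq' _
      · simp; positivity
    have expand : (tanhQ (n+1)).coeff i = (derivative (tanhQ n)).coeff i
        - (derivative (tanhQ n) * X^2).coeff i - 2 * (tanhQ n * X^1).coeff i := by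
      show (derivative (tanhQ n) - derivative (tanhQ n) * X^2 - C 2 * (tanhQ n * X^1)).coeff i = _
      simp [coeff_sub, coeff_C_mul]
    rw [expand]
    have h1 := hq' i
    have h2 := hq'X i
    have h3 := hqX i
    have hcast : ((n+1)! : ℝ) = ((n:ℝ)+1) * (n ! : ℝ) := by
      push_cast [Nat.factorial_succ]; ring
    have habs : |(derivative (tanhQ n)).coeff i - (derivative (tanhQ n) * X^2).coeff i
        - 2 * (tanhQ n * X^1).coeff i| ≤ (n:ℝ) * (2^n * (n ! : ℝ)) + (n:ℝ) * (2^n * (n ! : ℝ))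
        + 2 * (2^n * (n ! : ℝ)) := by
      calc _ ≤ |(derivative (tanhQ n)).coeff i - (derivative (tanhQ n) * X^2).coeff i|
            + |2 * (tanhQ n * X^1).coeff i| := abs_sub _ _
        _ ≤ _ := by
            rw [abs_mul]
            have := abs_sub ((derivative (tanhQ n)).coeff i) ((derivative (tanhQ n) * X^2).coeff i)
            simp only [abs_two]
            nlinarith [h1, h2, h3, abs_nonneg ((tanhQ n * X^1).coeff i)]
    refine le_trans habs ?_
    rw [hcast]
    ring_nf
    nlinarith [hB]




lemma evalQ (n : ℕ) (t : ℝ) (ht : |t| ≤ 1) :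
    |(tanhQ n).eval t| ≤ ((n:ℝ)+1) * (2^n * (n ! : ℝ)) := by
  rw [eval_eq_sum_range]
  have hB : (0:ℝ) ≤ 2^n * (n ! : ℝ) := by positivity
  calc |∑ i ∈ Finset.range ((tanhQ n).natDegree + 1), (tanhQ n).coeff i * t ^ i|
      ≤ ∑ i ∈ Finset.range ((tanhQ n).natDegree + 1), |(tanhQ n).coeff i * t ^ i| :=
        Finset.abs_sum_le_sum_abs _ _
    _ ≤ ∑ _i ∈ Finset.range ((tanhQ n).natDegree + 1), (2^n * (n ! : ℝ)) := by
        refine Finset.sum_le_sum fun i _ => ?_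
        rw [abs_mul, abs_pow]
        calc |(tanhQ n).coeff i| * |t| ^ i ≤ (2^n * (n ! : ℝ)) * 1 :=
              mul_le_mul (coeffQ n i) (pow_le_one₀ (abs_nonneg t) ht) (by positivity) hB
          _ = 2^n * (n ! : ℝ) := mul_one _
    _ = ((tanhQ n).natDegree + 1 : ℝ) * (2^n * (n ! : ℝ)) := by
        rw [Finset.sum_const, Finset.card_range]; push_cast; ring
    _ ≤ ((n:ℝ)+1) * (2^n * (n ! : ℝ)) := by
        have : ((tanhQ n).natDegree : ℝ) ≤ (n:ℝ) := by exact_mod_cast degQ n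
        nlinarith [hB]





lemma abs_tanh_le_one (x : ℝ) : |Real.tanh x| ≤ 1 := by
  rw [Real.tanh_eq_sinh_div_cosh, abs_div, abs_of_pos (Real.cosh_pos x),
    div_le_one (Real.cosh_pos x)]
  have h := Real.cosh_sq x
  cases abs_cases (Real.sinh x) with
  | inl h1 => nlinarith [Real.cosh_pos x]
  | inr h1 => nlinarith [Real.cosh_pos x]

lemma one_sub_tanh_sq (x : ℝ) : 1 - Real.tanh x ^ 2 = 1 / Real.cosh x ^ 2 := by
  have hc := Real.cosh_pos x
  rw [Real.tanh_eq_sinh_div_cosh]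
  have h := Real.cosh_sq_sub_sinh_sq x
  field_simp
  exact h

lemma exp_le_two_cosh (x : ℝ) : Real.exp x ≤ 2 * Real.cosh x := by
  rw [Real.cosh_eq]
  have := Real.exp_pos (-x)
  linarith

lemma one_sub_tanh_sq_le (x : ℝ) : 1 - Real.tanh x ^ 2 ≤ 4 * Real.exp (-(2*x)) := by
  rw [one_sub_tanh_sq]
  have hc := Real.cosh_pos x
  have h1 : Real.exp x ≤ 2 * Real.cosh x := exp_le_two_cosh x
  have h2 : Real.exp x ^ 2 ≤ 4 * Real.cosh x ^ 2 := by nlinarith [Real.exp_pos x]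
  have h3 : Real.exp (-(2*x)) = 1 / Real.exp x ^ 2 := by
    rw [← Real.exp_nat_mul]
    push_cast
    rw [eq_div_iff (by positivity), ← Real.exp_add]
    norm_num
  rw [h3, mul_one_div]
  rw [div_le_div_iff₀ (by positivity) (by positivity)]
  nlinarith

lemma derivBound (m : ℕ) (hm : 1 ≤ m) (x : ℝ) :
    |iteratedDeriv m Real.tanh x| ≤ 2^(m+1) * (m ! : ℝ) * Real.exp (-(2*x)) := by
  obtain ⟨n, rfl⟩ : ∃ n, m = n + 1 := ⟨m - 1, by omega⟩
  rw [iterP (n+1)]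
  simp only
  rw [PQ n, eval_mul]
  rw [abs_mul]
  have h1 : |eval (Real.tanh x) (1 - X^2)| ≤ 4 * Real.exp (-(2*x)) := by
    simp only [eval_sub, eval_one, eval_pow, eval_X]
    have hnn : (0:ℝ) ≤ 1 - Real.tanh x ^ 2 := by
      rw [one_sub_tanh_sq]; positivity
    rw [abs_of_nonneg hnn]
    exact one_sub_tanh_sq_le x
  have h2 := evalQ n (Real.tanh x) (abs_tanh_le_one x)
  have hB : (0:ℝ) ≤ ((n:ℝ)+1) * (2^n * (n ! : ℝ)) := by positivity
  calc |eval (Real.tanh x) (1 - X^2)| * |eval (Real.tanh x) (tanhQ n)|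
      ≤ (4 * Real.exp (-(2*x))) * (((n:ℝ)+1) * (2^n * (n ! : ℝ))) :=
        mul_le_mul h1 h2 (abs_nonneg _) (by positivity)
    _ = 2^(n+1+1) * ((n+1)! : ℝ) * Real.exp (-(2*x)) := by
        push_cast [Nat.factorial_succ]
        ring


lemma pow_le_exp_aux (m : ℕ) (hm : 1 ≤ m) (x : ℝ) (hx : 0 ≤ x) :
    x ^ m ≤ (m:ℝ)^m * Real.exp (x - m) := by
  have hm0 : (0:ℝ) < m := by exact_mod_cast hm
  have h1 : x / m ≤ Real.exp (x/m - 1) := by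
    have := Real.add_one_le_exp (x/m - 1); linarith
  have h2 : x ≤ (m:ℝ) * Real.exp (x/m - 1) := by
    rw [div_le_iff₀ hm0] at h1; linarith
  calc x^m ≤ ((m:ℝ) * Real.exp (x/m - 1))^m := pow_le_pow_left₀ hx h2 m
    _ = (m:ℝ)^m * (Real.exp (x/m - 1))^m := mul_pow _ _ _
    _ = (m:ℝ)^m * Real.exp (x - m) := by
        rw [← Real.exp_nat_mul]
        congr 1
        field_simp

lemma key_ineq (k N m : ℕ) (hk : 1 ≤ k) (hN : 1 ≤ N) (hm1 : 1 ≤ m) (hmk : m ≤ k) :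
    2^(m+1) * (N:ℝ)^m * (m ! : ℝ) * (m:ℝ)^m * Real.exp ((k:ℝ) - m) ≤
      (2*(k:ℝ))^(k+1) * ((N:ℝ)*k)^k := by
  have hN1 : (1:ℝ) ≤ (N:ℝ) := by exact_mod_cast hN
  have hk1 : (1:ℝ) ≤ (k:ℝ) := by exact_mod_cast hk
  have hm0 : (0:ℝ) ≤ (m:ℝ) := by positivity
  have hmk' : (m:ℝ) ≤ (k:ℝ) := by exact_mod_cast hmk
  have hpows : (k:ℝ)^(2*k+1) = (k:ℝ)^(k+1) * (k:ℝ)^k := by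
    rw [← pow_add]; congr 1; omega
  have hRHS : (2*(k:ℝ))^(k+1) * ((N:ℝ)*k)^k
      = 2^(k+1) * (N:ℝ)^k * (k:ℝ)^(2*k+1) := by
    rw [mul_pow, mul_pow, hpows]; ring
  rw [hRHS]
  have t1 : (2:ℝ)^(m+1) ≤ 2^(k+1) := pow_le_pow_right₀ (by norm_num) (by omega)
  have t2 : (N:ℝ)^m ≤ (N:ℝ)^k := pow_le_pow_right₀ hN1 hmk
  have t3 : (m ! : ℝ) ≤ (m:ℝ)^m := by exact_mod_cast Nat.factorial_le_pow m
  have t4 : (m:ℝ)^m * (m:ℝ)^m * Real.exp ((k:ℝ) - m) ≤ (k:ℝ)^(2*k+1) := by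
    have hd : ((k:ℝ) - m) = ((k - m : ℕ):ℝ) := by
      have := Nat.cast_sub hmk (R := ℝ); linarith
    rw [hd]
    have hexpd : Real.exp ((k - m : ℕ):ℝ) = Real.exp 1 ^ (k - m) := by
      rw [← Real.exp_nat_mul]; norm_num
    rw [hexpd]
    rcases Nat.lt_or_ge k 2 with h2 | h2
    · -- k = 1, so m = 1
      interval_cases k
      interval_cases m
      norm_num [Real.exp_zero]
    · have hk2 : (2:ℝ) ≤ (k:ℝ) := by exact_mod_cast h2
      have he : Real.exp 1 ≤ (k:ℝ)^2 := by
        have := Real.exp_one_lt_d9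
        nlinarith
      have h5 : Real.exp 1 ^ (k - m) ≤ ((k:ℝ)^2)^(k-m) :=
        pow_le_pow_left₀ (Real.exp_pos 1).le he _
      have h6 : (m:ℝ)^m ≤ (k:ℝ)^m := pow_le_pow_left₀ hm0 hmk' m
      have h7 : (m:ℝ)^m * (m:ℝ)^m * Real.exp 1 ^ (k-m)
          ≤ (k:ℝ)^m * (k:ℝ)^m * ((k:ℝ)^2)^(k-m) := by
        gcongr <;> first | exact hm0 | exact hmk' | exact h5
      refine le_trans h7 ?_
      rw [← pow_mul, ← pow_add, ← pow_add]
      refine pow_le_pow_right₀ hk1 ?_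
      omega
  calc 2^(m+1) * (N:ℝ)^m * (m ! : ℝ) * (m:ℝ)^m * Real.exp ((k:ℝ) - m)
      ≤ 2^(k+1) * (N:ℝ)^k * (m:ℝ)^m * (m:ℝ)^m * Real.exp ((k:ℝ) - m) := by
        gcongr
    _ = 2^(k+1) * (N:ℝ)^k * ((m:ℝ)^m * (m:ℝ)^m * Real.exp ((k:ℝ) - m)) := by ring
    _ ≤ 2^(k+1) * (N:ℝ)^k * (k:ℝ)^(2*k+1) := by gcongr



lemma one_sub_tanh_le (x : ℝ) : 1 - Real.tanh x ≤ 2 * Real.exp (-(2*x)) := by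
  have hc := Real.cosh_pos x
  have h1 : 1 - Real.tanh x = Real.exp (-x) / Real.cosh x := by
    rw [Real.tanh_eq_sinh_div_cosh, ← Real.cosh_sub_sinh]
    field_simp
  rw [h1]
  have h2 : Real.exp (-(2*x)) = Real.exp (-x) * Real.exp (-x) := by
    rw [← Real.exp_add]; ring_nf
  rw [h2, div_le_iff₀ hc]
  have h3 := exp_le_two_cosh x
  have h4 : Real.exp (-x) * Real.exp x = 1 := by rw [← Real.exp_add]; simp
  nlinarith [Real.exp_pos (-x), Real.exp_pos x]

lemma tanh_nonneg' (x : ℝ) (hx : 0 ≤ x) : 0 ≤ Real.tanh x := by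
  rw [Real.tanh_eq_sinh_div_cosh]
  exact div_nonneg (Real.sinh_nonneg_iff.mpr hx) (Real.cosh_pos x).le


/-- **Lemma A.5.** For `k, N ≥ 1`, `ε > 0` and `R > 0` such that `|tanh^{(m)}|` is
monotonically decreasing on `[R, ∞)` for every `1 ≤ m ≤ k`, the choice
`α = N · max{R, ln((2k)^{k+1} (Nk)^k / (e^k ε))}` satisfies `α/N ≥ R`,
`1 - tanh(α/N) ≤ ε` and `α^m |tanh^{(m)}(α/N)| ≤ ε` for all `1 ≤ m ≤ k`. -/
theorem tanh_partition_alpha_choice (k N : ℕ) (hk : 1 ≤ k) (hN : 1 ≤ N)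
    (ε R : ℝ) (hε : 0 < ε) (hR : 0 < R)
    (hdec : ∀ m : ℕ, 1 ≤ m → m ≤ k →
      AntitoneOn (fun x : ℝ => |iteratedDeriv m Real.tanh x|) (Set.Ici R)) :
    R ≤ ((N : ℝ) * max R (Real.log ((2 * (k : ℝ)) ^ (k + 1) * ((N : ℝ) * k) ^ k /
        (Real.exp k * ε)))) / N ∧
    1 - Real.tanh (((N : ℝ) * max R (Real.log ((2 * (k : ℝ)) ^ (k + 1) * ((N : ℝ) * k) ^ k /
        (Real.exp k * ε)))) / N) ≤ ε ∧
    ∀ m : ℕ, 1 ≤ m → m ≤ k →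
      ((N : ℝ) * max R (Real.log ((2 * (k : ℝ)) ^ (k + 1) * ((N : ℝ) * k) ^ k /
          (Real.exp k * ε)))) ^ m *
        |iteratedDeriv m Real.tanh
          (((N : ℝ) * max R (Real.log ((2 * (k : ℝ)) ^ (k + 1) * ((N : ℝ) * k) ^ k /
            (Real.exp k * ε)))) / N)| ≤ ε := by
  have hN0 : (0:ℝ) < N := by exact_mod_cast hN
  have hk0 : (0:ℝ) < k := by exact_mod_cast hk
  have hk1 : (1:ℝ) ≤ (k:ℝ) := by exact_mod_cast hk
  have hN1 : (1:ℝ) ≤ (N:ℝ) := by exact_mod_cast hN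
  set c : ℝ := (2 * (k : ℝ)) ^ (k + 1) * ((N : ℝ) * k) ^ k with hc_def
  set L : ℝ := max R (Real.log (c / (Real.exp k * ε))) with hL_def
  have hNL : ((N:ℝ) * L) / N = L := mul_div_cancel_left₀ _ hN0.ne'
  have hRL : R ≤ L := by rw [hL_def]; exact le_max_left _ _
  have hL0 : 0 < L := lt_of_lt_of_le hR hRL
  have hc0 : 0 < c := by
    rw [hc_def]
    apply mul_pos (pow_pos (by linarith) _) (pow_pos (by nlinarith) _)
  set A : ℝ := c / Real.exp k with hA_def
  have hA0 : 0 < A := div_pos hc0 (Real.exp_pos _)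
  have hlogL : Real.log (A / ε) ≤ L := by
    rw [hA_def, div_div, hL_def]; exact le_max_right _ _
  clear_value A
  clear_value L
  clear_value c
  have hexpL : A / ε ≤ Real.exp L :=
    calc A / ε = Real.exp (Real.log (A / ε)) := (Real.exp_log (by positivity)).symm
      _ ≤ Real.exp L := Real.exp_le_exp.mpr hlogL
  have hkey : A * Real.exp (-L) ≤ ε := by
    rw [Real.exp_neg, mul_inv_le_iff₀ (Real.exp_pos L)]
    rw [div_le_iff₀ hε] at hexpL
    linarith
  -- lower bound on A
  have hA4 : 4 / Real.exp 1 ≤ A := by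
    have c2 : Real.exp 1 ^ (k-1) ≤ (2*(k:ℝ))^(k-1) := by
      rcases Nat.lt_or_ge k 2 with h2 | h2
      · interval_cases k; simp
      · apply pow_le_pow_left₀ (Real.exp_pos 1).le
        have : (2:ℝ) ≤ (k:ℝ) := by exact_mod_cast h2
        nlinarith [Real.exp_one_lt_d9]
    have c3 : Real.exp 1 ^ (k-1) * Real.exp 1 = Real.exp k := by
      rw [← Real.exp_nat_mul, ← Real.exp_add]
      congr 1
      have : ((k-1 : ℕ):ℝ) = (k:ℝ) - 1 := by
        have := Nat.cast_sub hk (R := ℝ); simpa using this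
      rw [mul_one, this]; ring
    have c1 : 4 * (2*(k:ℝ))^(k-1) ≤ (2*(k:ℝ))^(k+1) := by
      have : (2*(k:ℝ))^(k+1) = (2*(k:ℝ))^(k-1) * (2*(k:ℝ))^2 := by
        rw [← pow_add]; congr 1; omega
      rw [this]
      have h4 : (4:ℝ) ≤ (2*(k:ℝ))^2 := by nlinarith
      nlinarith [pow_pos (show (0:ℝ) < 2*(k:ℝ) by linarith) (k-1)]
    have c4 : (1:ℝ) ≤ ((N:ℝ)*k)^k := one_le_pow₀ (by nlinarith)
    have hcge : 4 * Real.exp (k:ℝ) ≤ c * Real.exp 1 := by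
      rw [← c3]
      calc 4 * (Real.exp 1^(k-1) * Real.exp 1) = (4 * Real.exp 1^(k-1)) * Real.exp 1 := by ring
        _ ≤ ((2*(k:ℝ))^(k+1)) * Real.exp 1 := by
            have s1 : 4 * Real.exp 1^(k-1) ≤ 4 * (2*(k:ℝ))^(k-1) := by linarith [c2]
            exact mul_le_mul_of_nonneg_right (le_trans s1 c1) (Real.exp_pos 1).le
        _ ≤ c * Real.exp 1 := by
            refine mul_le_mul_of_nonneg_right ?_ (Real.exp_pos 1).le
            rw [hc_def]
            exact le_mul_of_one_le_right (by positivity) c4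
    rw [hA_def, div_le_div_iff₀ (Real.exp_pos 1) (Real.exp_pos _)]
    linarith
  refine ⟨by rw [hNL]; exact hRL, ?_, ?_⟩
  · rw [hNL]
    rcases le_or_gt 1 ε with h1 | h1
    · have ht0 : 0 ≤ Real.tanh L := tanh_nonneg' L hL0.le
      linarith
    · have h2 := one_sub_tanh_le L
      have hA2 : (2:ℝ) ≤ A^2 := by
        have he9 := Real.exp_one_lt_d9
        have he0 := Real.exp_pos 1
        have h147 : (1.47:ℝ) < 4 / Real.exp 1 := by
          rw [lt_div_iff₀ he0]; nlinarith
        nlinarith [hA4, h147, sq_nonneg (A - 1.47)]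
      have hu0 : (0:ℝ) < Real.exp (-L) := Real.exp_pos _
      have he2 : Real.exp (-(2*L)) = Real.exp (-L) * Real.exp (-L) := by
        rw [← Real.exp_add]; ring_nf
      have hAu : 0 ≤ A * Real.exp (-L) := mul_nonneg hA0.le hu0.le
      have huu : (0:ℝ) ≤ Real.exp (-L) * Real.exp (-L) := mul_nonneg hu0.le hu0.le
      have h5 : 2 * (Real.exp (-L) * Real.exp (-L)) ≤ A^2 * (Real.exp (-L) * Real.exp (-L)) :=
        mul_le_mul_of_nonneg_right hA2 huu
      have h6 : A^2 * (Real.exp (-L) * Real.exp (-L)) = (A * Real.exp (-L)) * (A * Real.exp (-L)) := by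
        ring
      have h7 : (A * Real.exp (-L)) * (A * Real.exp (-L)) ≤ ε * ε :=
        mul_self_le_mul_self hAu hkey
      have h8 : ε * ε ≤ ε := by nlinarith [hε, h1]
      rw [he2] at h2
      linarith
  · intro m hm1 hmk
    rw [hNL]
    have hg := derivBound m hm1 L
    have hLm := pow_le_exp_aux m hm1 L hL0.le
    have hKEY := key_ineq k N m hk hN hm1 hmk
    rw [← hc_def] at hKEY
    have eA : Real.exp (L - (m:ℝ)) * Real.exp (-(2*L))
        = Real.exp ((k:ℝ) - m) * Real.exp (-(k:ℝ)) * Real.exp (-L) := by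
      rw [← Real.exp_add, ← Real.exp_add, ← Real.exp_add]; congr 1; ring
    calc ((N:ℝ)*L)^m * |iteratedDeriv m Real.tanh L|
        = (N:ℝ)^m * L^m * |iteratedDeriv m Real.tanh L| := by rw [mul_pow]
      _ ≤ (N:ℝ)^m * ((m:ℝ)^m * Real.exp (L - m)) * (2^(m+1) * (m ! :ℝ) * Real.exp (-(2*L))) := by
          gcongr
      _ = (2^(m+1) * (N:ℝ)^m * (m ! : ℝ) * (m:ℝ)^m * Real.exp ((k:ℝ)-m))
            * Real.exp (-(k:ℝ)) * Real.exp (-L) := by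
          rw [show (N:ℝ)^m * ((m:ℝ)^m * Real.exp (L - m)) * (2^(m+1) * (m ! :ℝ) * Real.exp (-(2*L)))
            = (2^(m+1) * (N:ℝ)^m * (m ! : ℝ) * (m:ℝ)^m) * (Real.exp (L - (m:ℝ)) * Real.exp (-(2*L)))
            from by ring, eA]
          ring
      _ ≤ c * Real.exp (-(k:ℝ)) * Real.exp (-L) := by gcongr
      _ = A * Real.exp (-L) := by
          rw [hA_def, Real.exp_neg, div_eq_mul_inv]
      _ ≤ ε := hkey
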